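/- Let A be symmetric with Ā := (tr(A)I - A)/2 positive definite and set U_A(X) := tr(A(I-X))/(4λ_max(Ā)) and V_A(X) := 2(1 - √(1 - U_A(X))). Then for all X in SO(3) with U_A(X) < 1: ξ|X|_I² ≤ U_A(X) ≤ V_A(X) ≤ 2U_A(X) ≤ 2|X|_I², where ξ = λ_min(Ā)/λ_max(Ā) and |X|_I² = tr(I-X)/4. -/

import Mathlib

open Matrix

/-- `Ā = (tr(A)·I - A)/2`. -/
noncomputable def barM (A : Matrix (Fin 3) (Fin 3) ℝ) : Matrix (Fin 3) (Fin 3) ℝ :=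
  (1 / 2 : ℝ) • (A.trace • (1 : Matrix (Fin 3) (Fin 3) ℝ) - A)

lemma traceA (W : Matrix (Fin 3) (Fin 3) ℝ) (hW : Wᵀ * W = 1) (hd : W.det = -1) :
    W.trace ≤ 1 := by
  have hadj : W.adjugate = -Wᵀ := by
    have h1 : Wᵀ * (W * W.adjugate) = W.adjugate := by rw [← mul_assoc, hW, one_mul]
    rw [Matrix.mul_adjugate, hd] at h1
    rw [← h1]; ext i j; simp [Matrix.smul_apply]
  have htr : (W.adjugate).trace = -W.trace := by rw [hadj]; simp [trace_transpose]
  -- extract entries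
  have he : ∀ i j, (Wᵀ * W) i j = (1 : Matrix (Fin 3) (Fin 3) ℝ) i j := fun i j => by rw [hW]
  have h00 := he 0 0; have h11 := he 1 1; have h22 := he 2 2
  simp [mul_apply, Fin.sum_univ_three, Matrix.one_apply] at h00 h11 h22
  rw [Matrix.adjugate_fin_three] at htr
  simp [Matrix.trace_fin_three, Matrix.of_apply] at htr ⊢
  nlinarith [sq_nonneg (W 0 1 - W 1 0), sq_nonneg (W 0 2 - W 2 0), sq_nonneg (W 1 2 - W 2 1),
    sq_nonneg (W 0 0 + 1), sq_nonneg (W 1 1 + 1), sq_nonneg (W 2 2 + 1),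
    sq_nonneg (W 0 0 + W 1 1 + W 2 2 + 3), sq_nonneg (W 0 0 + W 1 1 + W 2 2 - 1)]

lemma psdP (X : Matrix (Fin 3) (Fin 3) ℝ) (hX : Xᵀ * X = 1) (hdet : X.det = 1)
    (y : Fin 3 → ℝ) :
    0 ≤ y ⬝ᵥ ((1 - X.trace) • (1 : Matrix (Fin 3) (Fin 3) ℝ) + X + Xᵀ) *ᵥ y := by
  rcases eq_or_ne y 0 with rfl | hy
  · simp
  have hc : 0 < y ⬝ᵥ y := by
    have h1 : y ⬝ᵥ y = ∑ i, y i ^ 2 := by simp [dotProduct, sq]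
    rw [h1]
    rcases Function.ne_iff.mp hy with ⟨i, hi⟩
    exact Finset.sum_pos' (fun j _ => sq_nonneg _)
      ⟨i, Finset.mem_univ i, pow_two_pos_of_ne_zero hi⟩
  set c := y ⬝ᵥ y with hcdef
  have hcne : c ≠ 0 := hc.ne'
  set V : Matrix (Fin 3) (Fin 3) ℝ := vecMulVec y y with hV
  have hVsym : Vᵀ = V := by
    ext i j; simp [hV, vecMulVec_apply, transpose_apply]; ring
  have hVV : V * V = c • V := by
    ext i j
    simp only [hV, mul_apply, vecMulVec_apply, Matrix.smul_apply, smul_eq_mul, hcdef, dotProduct]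
    rw [Finset.sum_congr rfl (fun k _ => show y i * y k * (y k * y j) = y k * y k * (y i * y j) by ring),
      ← Finset.sum_mul]
  set H : Matrix (Fin 3) (Fin 3) ℝ := 1 - (2/c) • V with hH
  have hHsym : Hᵀ = H := by
    rw [hH, transpose_sub, transpose_one, transpose_smul, hVsym]
  have hHH : H * H = 1 := by
    rw [hH]
    simp only [sub_mul, mul_sub, one_mul, mul_one, smul_mul_assoc, mul_smul_comm, hVV,
      smul_smul, smul_sub]
    have h4 : 2 / c * (2 / c * c) = 2/c + 2/c := by field_simp; ring
    rw [h4, add_smul]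
    abel
  have hdH : H.det = -1 := by
    have heq : H = 1 + Matrix.replicateCol Unit ((-(2/c)) • y) * Matrix.replicateRow Unit y := by
      rw [hH]; ext i j
      simp [Matrix.replicateCol, Matrix.replicateRow, mul_apply, hV, vecMulVec_apply, Matrix.one_apply,
        Matrix.sub_apply, Matrix.add_apply]
      ring
    rw [heq, det_one_add_replicateCol_mul_replicateRow, dotProduct_smul, ← hcdef]
    simp only [smul_eq_mul]
    field_simp
    ring
  have hW : (X * H)ᵀ * (X * H) = 1 := by
    rw [transpose_mul, hHsym, mul_assoc, ← mul_assoc Xᵀ X H, hX, one_mul, hHH]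
  have hdW : (X * H).det = -1 := by rw [det_mul, hdet, hdH]; ring
  have htr := traceA (X * H) hW hdW
  have htrXH : (X * H).trace = X.trace - (2/c) * (y ⬝ᵥ X *ᵥ y) := by
    rw [hH, mul_sub, mul_one, trace_sub, mul_smul_comm, trace_smul, smul_eq_mul]
    congr 1
    congr 1
    rw [hV]
    simp only [Matrix.trace, Matrix.diag, mul_apply, vecMulVec_apply, dotProduct, mulVec,
      Finset.mul_sum]
    exact Finset.sum_congr rfl fun i _ => Finset.sum_congr rfl fun j _ => by ring
  have hquad : y ⬝ᵥ ((1 - X.trace) • (1 : Matrix (Fin 3) (Fin 3) ℝ) + X + Xᵀ) *ᵥ y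
      = (1 - X.trace) * c + 2 * (y ⬝ᵥ X *ᵥ y) := by
    rw [add_mulVec, add_mulVec, dotProduct_add, dotProduct_add, smul_mulVec,
      one_mulVec, dotProduct_smul, smul_eq_mul, ← hcdef]
    have h7 : y ⬝ᵥ Xᵀ *ᵥ y = y ⬝ᵥ X *ᵥ y := by
      rw [mulVec_transpose, dotProduct_comm, dotProduct_mulVec]
    rw [h7]; ring
  rw [hquad]
  rw [htrXH] at htr
  have h6 : (X.trace - (2/c) * (y ⬝ᵥ X *ᵥ y)) * c = X.trace * c - 2 * (y ⬝ᵥ X *ᵥ y) := by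
    field_simp
  have h8 := mul_le_mul_of_nonneg_right htr hc.le
  rw [h6, one_mul] at h8
  linarith

lemma spec_bounds (B P : Matrix (Fin 3) (Fin 3) ℝ) (hB : B.IsHermitian)
    (hP : ∀ y : Fin 3 → ℝ, 0 ≤ y ⬝ᵥ P *ᵥ y) :
    (⨅ i, hB.eigenvalues i) * P.trace ≤ (B * P).trace ∧
      (B * P).trace ≤ (⨆ i, hB.eigenvalues i) * P.trace := by
  set U : Matrix (Fin 3) (Fin 3) ℝ := (hB.eigenvectorUnitary : Matrix (Fin 3) (Fin 3) ℝ) with hU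
  set D : Matrix (Fin 3) (Fin 3) ℝ := diagonal (RCLike.ofReal ∘ hB.eigenvalues) with hD
  have hUU : U * star U = 1 := Matrix.mem_unitaryGroup_iff.mp hB.eigenvectorUnitary.2
  set N : Matrix (Fin 3) (Fin 3) ℝ := star U * P * U with hN
  have htrN : N.trace = P.trace := by
    rw [hN, trace_mul_cycle, hUU, one_mul]
  have hdiag : ∀ i, 0 ≤ N i i := by
    intro i
    have h := hP (fun j => U j i)
    have heq : N i i = (fun j => U j i) ⬝ᵥ P *ᵥ (fun j => U j i) := by
      simp only [hN, mul_apply, dotProduct, mulVec, star_apply, conjTranspose_apply,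
        RCLike.star_def, starRingEnd_apply, star_trivial, Finset.sum_mul, Finset.mul_sum]
      rw [Finset.sum_comm]
      exact Finset.sum_congr rfl fun j _ => Finset.sum_congr rfl fun k _ => by ring
    rw [heq]; exact h
  have hspec := hB.spectral_theorem
  have htr : (B * P).trace = ∑ i, hB.eigenvalues i * N i i := by
    calc (B * P).trace
        = (U * D * star U * P).trace := by nth_rewrite 1 [hspec]; rfl
      _ = (D * N).trace := by
          rw [hN, mul_assoc (U * D), trace_mul_comm, ← mul_assoc, trace_mul_comm]
      _ = ∑ i, hB.eigenvalues i * N i i := by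
          simp [Matrix.trace, Matrix.diag, hD, diagonal_mul]
  constructor
  · rw [htr, ← htrN]
    have h2 : (⨅ i, hB.eigenvalues i) * N.trace = ∑ i, (⨅ j, hB.eigenvalues j) * N i i := by
      simp [Matrix.trace, Matrix.diag, Finset.mul_sum]
    rw [h2]
    exact Finset.sum_le_sum fun i _ =>
      mul_le_mul_of_nonneg_right (ciInf_le (Finite.bddBelow_range _) i) (hdiag i)
  · rw [htr, ← htrN]
    have h2 : (⨆ i, hB.eigenvalues i) * N.trace = ∑ i, (⨆ j, hB.eigenvalues j) * N i i := by
      simp [Matrix.trace, Matrix.diag, Finset.mul_sum]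
    rw [h2]
    exact Finset.sum_le_sum fun i _ =>
      mul_le_mul_of_nonneg_right (le_ciSup (Finite.bddAbove_range _) i) (hdiag i)

lemma trace_id (A X : Matrix (Fin 3) (Fin 3) ℝ) (hA : Aᵀ = A) :
    (barM A * ((1 - X.trace) • (1 : Matrix (Fin 3) (Fin 3) ℝ) + X + Xᵀ)).trace
      = (A * (1 - X)).trace := by
  have hAX : (A * Xᵀ).trace = (A * X).trace := by
    rw [← trace_transpose (A * Xᵀ), transpose_mul, transpose_transpose, hA, trace_mul_comm]
  have htr1 : (1 : Matrix (Fin 3) (Fin 3) ℝ).trace = 3 := by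
    simp [Matrix.trace_fin_three]
  simp only [barM, smul_mul_assoc, trace_smul, sub_mul, smul_mul_assoc, one_mul, mul_add,
    trace_add, trace_sub, mul_smul_comm, mul_one, trace_smul, smul_eq_mul, hAX, htr1,
    Matrix.mul_sub, trace_transpose]
  ring

lemma traceP (X : Matrix (Fin 3) (Fin 3) ℝ) :
    ((1 - X.trace) • (1 : Matrix (Fin 3) (Fin 3) ℝ) + X + Xᵀ).trace = (1 - X).trace := by
  have htr1 : (1 : Matrix (Fin 3) (Fin 3) ℝ).trace = 3 := by simp [Matrix.trace_fin_three]
  simp only [trace_add, trace_smul, trace_sub, trace_transpose, smul_eq_mul, htr1]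
  ring

theorem UA_VA_chain (A X : Matrix (Fin 3) (Fin 3) ℝ)
    (hA : Aᵀ = A) (hH : (barM A).IsHermitian) (hPD : (barM A).PosDef)
    (hX : Xᵀ * X = 1) (hdet : X.det = 1)
    (hU : (A * (1 - X)).trace / (4 * ⨆ i, hH.eigenvalues i) < 1) :
    ((⨅ i, hH.eigenvalues i) / (⨆ i, hH.eigenvalues i)) * ((1 - X).trace / 4)
        ≤ (A * (1 - X)).trace / (4 * ⨆ i, hH.eigenvalues i)
    ∧ (A * (1 - X)).trace / (4 * ⨆ i, hH.eigenvalues i)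
        ≤ 2 * (1 - Real.sqrt (1 - (A * (1 - X)).trace / (4 * ⨆ i, hH.eigenvalues i)))
    ∧ 2 * (1 - Real.sqrt (1 - (A * (1 - X)).trace / (4 * ⨆ i, hH.eigenvalues i)))
        ≤ 2 * ((A * (1 - X)).trace / (4 * ⨆ i, hH.eigenvalues i))
    ∧ 2 * ((A * (1 - X)).trace / (4 * ⨆ i, hH.eigenvalues i))
        ≤ 2 * ((1 - X).trace / 4) := by
  have hpos : ∀ i, 0 < hH.eigenvalues i := fun i => hPD.eigenvalues_pos i
  set m := ⨅ i, hH.eigenvalues i with hm_def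
  set M := ⨆ i, hH.eigenvalues i with hM_def
  set T := (1 - X).trace with hT_def
  set s := (A * (1 - X)).trace with hs_def
  have hM : 0 < M := lt_of_lt_of_le (hpos 0) (le_ciSup (Finite.bddAbove_range _) 0)
  have hm : 0 < m := by
    obtain ⟨i, hi⟩ := exists_eq_ciInf_of_finite (f := hH.eigenvalues)
    rw [hm_def, ← hi]; exact hpos i
  have h4M : (0:ℝ) < 4 * M := by linarith
  -- spectral bounds
  obtain ⟨hlow, hhigh⟩ := spec_bounds (barM A) _ hH (psdP X hX hdet)
  rw [trace_id A X hA, traceP X] at hlow hhigh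
  simp only [← hm_def, ← hM_def, ← hT_def, ← hs_def] at hlow hhigh
  -- T ≥ 0
  have hPdiag : ∀ i, 0 ≤ ((1 - X.trace) • (1 : Matrix (Fin 3) (Fin 3) ℝ) + X + Xᵀ) i i := by
    intro i
    have h := psdP X hX hdet (Pi.single i 1)
    simpa [dotProduct, mulVec, Pi.single_apply] using h
  have hT : 0 ≤ T := by
    rw [hT_def, ← traceP X]
    exact Finset.sum_nonneg fun i _ => hPdiag i
  have hs0 : 0 ≤ s := le_trans (mul_nonneg hm.le hT) hlow
  have hu0 : 0 ≤ s / (4 * M) := div_nonneg hs0 h4M.le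
  refine ⟨?_, ?_, ?_, ?_⟩
  · have heq : m / M * (T / 4) = (m * T) / (4 * M) := by
      rw [div_mul_div_comm, mul_comm M 4]
    rw [heq, div_le_div_iff₀ h4M h4M]
    nlinarith [mul_le_mul_of_nonneg_right hlow h4M.le]
  · set u := s / (4 * M) with hu_def
    have h1u : (0:ℝ) ≤ 1 - u := by linarith
    have hsq := Real.sq_sqrt h1u
    nlinarith [sq_nonneg (Real.sqrt (1 - u) - 1)]
  · set u := s / (4 * M) with hu_def
    have h1u : (0:ℝ) ≤ 1 - u := by linarith
    have hsq := Real.sq_sqrt h1u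
    have hle1 : Real.sqrt (1 - u) ≤ 1 := Real.sqrt_le_one.mpr (by linarith)
    nlinarith [Real.sqrt_nonneg (1 - u)]
  · have : s / (4 * M) ≤ T / 4 := by
      rw [div_le_div_iff₀ h4M (by norm_num : (0:ℝ) < 4)]
      nlinarith [hhigh]
    linarith
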